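/- The weak realignment criterion is weaker than the PPT criterion: for every bipartite density matrix ρ on ℂ^d ⊗ ℂ^d, ‖ρ^{T₂}‖_tr ≥ Tr R(ρ), where (·)^{T₂} is partial transposition on the second subsystem. In particular, if ‖ρ^{T₂}‖_tr = 1 (as for any PPT state) then Tr R(ρ) ≤ 1. -/

import Mathlib

open Matrix Kronecker ComplexOrder
open scoped MatrixOrder

/-- Trace norm `‖X‖_tr = Tr √(X Xᴴ)`. -/
noncomputable def traceNorm {m n : Type*} [Fintype m] [Fintype n] [DecidableEq m]
    (X : Matrix m n ℂ) : ℝ :=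
  (((Matrix.posSemidef_self_mul_conjTranspose X).1.eigenvectorUnitary.1 *
    diagonal ((fun x : ℝ => (x : ℂ)) ∘ (Real.sqrt ·) ∘ (Matrix.posSemidef_self_mul_conjTranspose X).1.eigenvalues) *
    (star (Matrix.posSemidef_self_mul_conjTranspose X).1.eigenvectorUnitary : Matrix m m ℂ)).trace).re

/-- A density matrix: positive semidefinite with trace 1. -/
def IsDensityMatrix {n : Type*} [Fintype n] (ρ : Matrix n n ℂ) : Prop :=
  ρ.PosSemidef ∧ ρ.trace = 1

/-- The realignment map: `R(ρ)_{(i,j),(k,l)} = ρ_{(i,k),(j,l)}`. -/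
def realign {dA dB : ℕ} (ρ : Matrix (Fin dA × Fin dB) (Fin dA × Fin dB) ℂ) :
    Matrix (Fin dA × Fin dA) (Fin dB × Fin dB) ℂ :=
  fun p q => ρ (p.1, q.1) (p.2, q.2)

/-- Partial transpose on the second subsystem: `(ρ^{T₂})_{(i,k),(j,l)} = ρ_{(i,l),(j,k)}`. -/
def ptranspose2 {d : ℕ} (ρ : Matrix (Fin d × Fin d) (Fin d × Fin d) ℂ) :
    Matrix (Fin d × Fin d) (Fin d × Fin d) ℂ :=
  fun p q => ρ (p.1, q.2) (q.1, p.2)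

/-- The swap (exchange) operator `F_{(i,k),(j,l)} = δ_{il} δ_{kj}`. -/
def swapOp (d : ℕ) : Matrix (Fin d × Fin d) (Fin d × Fin d) ℂ :=
  fun p q => if p.1 = q.2 ∧ p.2 = q.1 then 1 else 0

/-- The unnormalized maximally entangled projector `(|Ω⟩⟨Ω|)_{(i,k),(j,l)} = δ_{ik} δ_{jl}`. -/
def omegaProj (d : ℕ) : Matrix (Fin d × Fin d) (Fin d × Fin d) ℂ :=
  fun p q => if p.1 = p.2 ∧ q.1 = q.2 then 1 else 0

/-- Separability: `ρ` is a finite convex combination of products of density matrices. -/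
def IsSeparableState {dA dB : ℕ} (ρ : Matrix (Fin dA × Fin dB) (Fin dA × Fin dB) ℂ) : Prop :=
  ∃ (m : ℕ) (p : Fin m → ℝ) (σ : Fin m → Matrix (Fin dA) (Fin dA) ℂ)
    (τ : Fin m → Matrix (Fin dB) (Fin dB) ℂ),
    (∀ k, 0 ≤ p k) ∧ (∑ k, p k = 1) ∧ (∀ k, IsDensityMatrix (σ k)) ∧
    (∀ k, IsDensityMatrix (τ k)) ∧ ρ = ∑ k, (p k : ℂ) • (σ k ⊗ₖ τ k)

/- ## Auxiliary lemmas -/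

lemma aux_trace_re_nonneg {n : Type*} [Fintype n] [DecidableEq n] {M : Matrix n n ℂ}
    (hM : M.PosSemidef) : 0 ≤ M.trace.re := by
  rw [Matrix.trace, Complex.re_sum]
  refine Finset.sum_nonneg fun i _ => ?_
  have := hM.re_dotProduct_nonneg (Pi.single i 1)
  simpa [dotProduct, Matrix.mulVec, Pi.single_apply, Matrix.diag] using this

lemma aux_trace_mul_re_nonneg {n : Type*} [Fintype n] [DecidableEq n] {A B : Matrix n n ℂ}
    (hA : A.PosSemidef) (hB : B.PosSemidef) : 0 ≤ ((A * B).trace).re := by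
  have key : PosSemidef (CFC.sqrt B * A * (CFC.sqrt B)ᴴ) := hA.mul_mul_conjTranspose_same _
  have ht : (CFC.sqrt B * A * (CFC.sqrt B)ᴴ).trace = (A * B).trace := by
    rw [(CFC.sqrt_nonneg B).posSemidef.1.eq, Matrix.mul_assoc, Matrix.trace_mul_comm,
      Matrix.mul_assoc, CFC.sqrt_mul_sqrt_self B hB.nonneg]
  rw [← ht]
  exact aux_trace_re_nonneg key

lemma aux_swap_mul_self (d : ℕ) : swapOp d * swapOp d = 1 := by
  ext p q
  simp only [swapOp, Matrix.mul_apply, Fintype.sum_prod_type, ite_and, ite_mul, one_mul,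
    zero_mul, Finset.sum_ite_eq, Finset.sum_ite_eq', Finset.mem_univ, if_true,
    Matrix.one_apply, Prod.ext_iff]
  by_cases h1 : p.1 = q.1 <;> by_cases h2 : p.2 = q.2 <;>
    simp [h1, h2, eq_comm]

lemma aux_swap_herm (d : ℕ) : (swapOp d).IsHermitian := by
  ext p q
  simp [swapOp, Matrix.conjTranspose_apply, and_comm, eq_comm]

lemma aux_trace_realign_eq {d : ℕ} (ρ : Matrix (Fin d × Fin d) (Fin d × Fin d) ℂ) :
    (realign ρ).trace = (swapOp d * ptranspose2 ρ).trace := by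
  simp only [Matrix.trace, Matrix.diag, Matrix.mul_apply, swapOp, ptranspose2, realign,
    Fintype.sum_prod_type, ite_and, ite_mul, one_mul, zero_mul, Finset.sum_ite_eq,
    Finset.sum_ite_eq', Finset.mem_univ, if_true]
  rw [Finset.sum_comm]

/-- Conjugation of a real diagonal by the eigenvector unitary of a Hermitian matrix. -/
noncomputable def conjU {n : Type*} [Fintype n] [DecidableEq n] {X : Matrix n n ℂ}
    (hX : X.IsHermitian) (f : n → ℝ) : Matrix n n ℂ :=
  (hX.eigenvectorUnitary : Matrix n n ℂ) * diagonal (fun i => (f i : ℂ)) *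
    star (hX.eigenvectorUnitary : Matrix n n ℂ)

section conjU
variable {n : Type*} [Fintype n] [DecidableEq n] {X : Matrix n n ℂ} (hX : X.IsHermitian)

lemma conjU_mul (f g : n → ℝ) : conjU hX f * conjU hX g = conjU hX (f * g) := by
  have hU : (star (hX.eigenvectorUnitary : Matrix n n ℂ)) *
      (hX.eigenvectorUnitary : Matrix n n ℂ) = 1 :=
    Matrix.mem_unitaryGroup_iff'.mp hX.eigenvectorUnitary.2
  simp only [conjU, Matrix.mul_assoc]
  rw [← Matrix.mul_assoc (star (hX.eigenvectorUnitary : Matrix n n ℂ)), hU, Matrix.one_mul,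
    ← Matrix.mul_assoc (diagonal _) _, diagonal_mul_diagonal]
  norm_num

lemma conjU_add (f g : n → ℝ) : conjU hX f + conjU hX g = conjU hX (f + g) := by
  simp only [conjU, ← Matrix.add_mul, ← Matrix.mul_add, ← diagonal_add]
  norm_num

lemma conjU_sub (f g : n → ℝ) : conjU hX f - conjU hX g = conjU hX (f - g) := by
  simp only [conjU, ← Matrix.sub_mul, ← Matrix.mul_sub, ← diagonal_sub]
  norm_num

lemma conjU_posSemidef {f : n → ℝ} (hf : ∀ i, 0 ≤ f i) : (conjU hX f).PosSemidef := by
  have hd : PosSemidef (diagonal (fun i => (f i : ℂ))) := by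
    refine PosSemidef.diagonal fun i => ?_
    simpa using Complex.real_le_real.mpr (hf i)
  have := hd.mul_mul_conjTranspose_same (hX.eigenvectorUnitary : Matrix n n ℂ)
  simpa [conjU, Matrix.star_eq_conjTranspose] using this

lemma conjU_eigen : conjU hX (hX.eigenvalues) = X := by
  rw [conjU]
  exact (hX.spectral_theorem).symm

end conjU

lemma aux_psd_one_sub {n : Type*} [Fintype n] [DecidableEq n] {F : Matrix n n ℂ}
    (hF : F.IsHermitian) (h2 : F * F = 1) : (1 - F).PosSemidef := by
  have hMh : (1 - F).IsHermitian := Matrix.isHermitian_one.sub hF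
  have hsq : (1 - F)ᴴ * (1 - F) = (1 - F) + (1 - F) := by
    rw [hMh.eq]
    have h : (1 - F) * (1 - F) = 1 - F - F + F * F := by noncomm_ring
    rw [h, h2]
    abel
  refine posSemidef_iff_dotProduct_mulVec.mpr ⟨hMh, fun x => ?_⟩
  have h := (posSemidef_iff_dotProduct_mulVec.mp (Matrix.posSemidef_conjTranspose_mul_self (1 - F))).2 x
  rw [hsq, Matrix.add_mulVec, dotProduct_add] at h
  rw [Complex.le_def] at h ⊢
  simp only [Complex.add_re, Complex.add_im, Complex.zero_re, Complex.zero_im] at h ⊢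
  exact ⟨by linarith [h.1], by linarith [h.2]⟩

lemma aux_psd_one_add {n : Type*} [Fintype n] [DecidableEq n] {F : Matrix n n ℂ}
    (hF : F.IsHermitian) (h2 : F * F = 1) : (1 + F).PosSemidef := by
  have := aux_psd_one_sub (F := -F) hF.neg (by rw [neg_mul_neg, h2])
  simpa [sub_neg_eq_add] using this

/-- The weak realignment criterion is weaker than the PPT criterion:
`‖ρ^{T₂}‖_tr ≥ Tr R(ρ)`; in particular `‖ρ^{T₂}‖_tr = 1` implies `Tr R(ρ) ≤ 1`. -/
theorem weak_realignment_weaker_than_ppt {d : ℕ}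
    (ρ : Matrix (Fin d × Fin d) (Fin d × Fin d) ℂ)
    (hρ : IsDensityMatrix ρ) :
    ((realign ρ).trace).re ≤ traceNorm (ptranspose2 ρ) ∧
    (traceNorm (ptranspose2 ρ) = 1 → ((realign ρ).trace).re ≤ 1) := by
  classical
  set X := ptranspose2 ρ with hXdef
  set F := swapOp d with hFdef
  have hXh : X.IsHermitian := by
    ext p q
    simpa [hXdef, ptranspose2, Matrix.conjTranspose_apply] using
      congrFun (congrFun hρ.1.1 (p.1, q.2)) (q.1, p.2)
  set lam := hXh.eigenvalues with hlam
  set S := conjU hXh (fun i => |lam i|) with hSdef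
  set P := conjU hXh (fun i => (|lam i| + lam i) / 2) with hPdef
  set N := conjU hXh (fun i => (|lam i| - lam i) / 2) with hNdef
  have hS : S.PosSemidef := conjU_posSemidef _ fun i => abs_nonneg _
  have hP : P.PosSemidef := conjU_posSemidef _ fun i => by
    have := neg_abs_le (lam i); linarith
  have hN : N.PosSemidef := conjU_posSemidef _ fun i => by
    have := le_abs_self (lam i); linarith
  have hfa : (fun i => (|lam i| + lam i) / 2) + (fun i => (|lam i| - lam i) / 2)
      = fun i => |lam i| := by funext i; simp only [Pi.add_apply]; ring
  have hfs : (fun i => (|lam i| + lam i) / 2) - (fun i => (|lam i| - lam i) / 2) = lam := by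
    funext i; simp only [Pi.sub_apply]; ring
  have hfm : (fun i => |lam i|) * (fun i => |lam i|) = lam * lam := by
    funext i; simp only [Pi.mul_apply]; exact abs_mul_abs_self _
  have hPNS : P + N = S := by
    rw [hPdef, hNdef, hSdef, conjU_add, hfa]
  have hXc : X = conjU hXh lam := (conjU_eigen hXh).symm
  have hPNX : P - N = X := by
    rw [hPdef, hNdef, conjU_sub, hfs]
    exact hXc.symm
  have hsq : S ^ 2 = X * Xᴴ := by
    rw [pow_two, hXh.eq, hSdef, conjU_mul, hfm, ← conjU_mul, ← hXc]
  have hsqrt : S = CFC.sqrt (X * Xᴴ) :=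
    (CFC.sqrt_unique (by rw [← pow_two]; exact hsq) hS.nonneg).symm
  have htn : traceNorm X = S.trace.re := by
    rw [traceNorm, hsqrt, CFC.sqrt_eq_cfc,
      cfc_nnreal_eq_real _ _ (Matrix.posSemidef_self_mul_conjTranspose X).nonneg,
      (Matrix.posSemidef_self_mul_conjTranspose X).1.cfc_eq, Matrix.IsHermitian.cfc,
      Unitary.conjStarAlgAut_apply]
    rw [show (fun x : ℝ => ((NNReal.sqrt x.toNNReal : ℝ))) = Real.sqrt from
      funext fun x => by rw [Real.sqrt]]
    congr 6
  -- the swap operator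
  have hF2 : F * F = 1 := aux_swap_mul_self d
  have hFh : F.IsHermitian := aux_swap_herm d
  have h1mF : (1 - F).PosSemidef := aux_psd_one_sub hFh hF2
  have h1pF : (1 + F).PosSemidef := aux_psd_one_add hFh hF2
  -- key identity
  have hid : (1 - F) * P + (1 + F) * N = S - F * X := by
    have h1 : (1 - F) * P + (1 + F) * N = (P + N) - F * (P - N) := by noncomm_ring
    rw [h1, hPNS, hPNX]
  have h0P : 0 ≤ (((1 - F) * P).trace).re := aux_trace_mul_re_nonneg h1mF hP
  have h0N : 0 ≤ (((1 + F) * N).trace).re := aux_trace_mul_re_nonneg h1pF hN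
  have htr : S.trace - (F * X).trace = ((1 - F) * P).trace + ((1 + F) * N).trace := by
    rw [← Matrix.trace_add, hid, Matrix.trace_sub]
  have hre := congrArg Complex.re htr
  rw [Complex.sub_re, Complex.add_re] at hre
  have hmain : ((F * X).trace).re ≤ S.trace.re := by linarith
  have hfirst : ((realign ρ).trace).re ≤ traceNorm X := by
    rw [aux_trace_realign_eq, htn]
    exact hmain
  exact ⟨hfirst, fun h => by rw [← h]; exact hfirst⟩
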